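/- Let (M,d) be a complete separable metric space, C : [0,∞) → [0,∞) non-decreasing, continuous, C(0) = 0, satisfying the doubling condition C(2y) ≤ λ C(y) for all y ≥ 0. Let μ_n, μ be Borel probability measures with ∫ C(2d(x,a)) dμ_n < ∞ and ∫ C(2d(x,a)) dμ < ∞ for some a ∈ M. If T_c(μ_n, μ) → 0 with c(x,y) = C(d(x,y)), then ∫ C(d(x,a)) dμ_n → ∫ C(d(x,a)) dμ. -/

import Mathlib

open MeasureTheory Set Filter
open scoped ENNReal BoundedContinuousFunction

/-- `IsCoupling π μ ν` means `π` is a probability measure on `M × M`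
with first marginal `μ` and second marginal `ν`. -/
def IsCoupling {M : Type*} [MeasurableSpace M] (π : Measure (M × M))
    (μ ν : Measure M) : Prop :=
  IsProbabilityMeasure π ∧ π.map Prod.fst = μ ∧ π.map Prod.snd = ν

/-- The Kantorovich minimal transportation cost for the cost `c(x,y) = C(d(x,y))`. -/
noncomputable def transportCost {M : Type*} [MetricSpace M] [MeasurableSpace M]
    (C : ℝ → ℝ) (μ ν : Measure M) : ℝ≥0∞ :=
  ⨅ (π : Measure (M × M)) (_ : IsCoupling π μ ν),
    ∫⁻ p, ENNReal.ofReal (C (dist p.1 p.2)) ∂π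

private lemma tail_tendsto_aux {M : Type*} [MeasurableSpace M] (μ : Measure M)
    (F : M → ℝ≥0∞) (hF : Measurable F) (hfin : ∫⁻ x, F x ∂μ ≠ ⊤)
    (S : ℕ → Set M) (hS : ∀ k, MeasurableSet (S k))
    (hv : ∀ x, ∀ᶠ k in atTop, x ∉ S k) :
    Tendsto (fun k => ∫⁻ x, (S k).indicator F x ∂μ) atTop (nhds 0) := by
  have h := tendsto_lintegral_of_dominated_convergence (μ := μ)
    (F := fun k => (S k).indicator F) (f := fun _ => 0) F
    (fun k => hF.indicator (hS k))
    (fun k => Filter.Eventually.of_forall fun x => Set.indicator_le_self _ _ x)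
    hfin
    (Filter.Eventually.of_forall fun x =>
      tendsto_const_nhds.congr' ((hv x).mono fun k hk => (Set.indicator_of_notMem hk F).symm))
  simpa using h

theorem tendsto_moments_of_tendsto_transportCost
    {M : Type*} [MetricSpace M] [CompleteSpace M] [TopologicalSpace.SeparableSpace M]
    [MeasurableSpace M] [BorelSpace M]
    (C : ℝ → ℝ) (hmono : MonotoneOn C (Ici 0)) (hcont : ContinuousOn C (Ici 0))
    (hC0 : C 0 = 0) (hCnonneg : ∀ x ∈ Ici (0:ℝ), 0 ≤ C x)
    (lam : ℝ) (hlam : 0 < lam) (hdbl : ∀ y : ℝ, 0 ≤ y → C (2 * y) ≤ lam * C y)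
    (μn : ℕ → Measure M) (μ : Measure M)
    [∀ n, IsProbabilityMeasure (μn n)] [IsProbabilityMeasure μ]
    (a : M)
    (hint_n : ∀ n, Integrable (fun x => C (2 * dist x a)) (μn n))
    (hint : Integrable (fun x => C (2 * dist x a)) μ)
    (hT : Tendsto (fun n => transportCost C (μn n) μ) atTop (nhds 0)) :
    Tendsto (fun n => ∫ x, C (dist x a) ∂(μn n)) atTop
      (nhds (∫ x, C (dist x a) ∂μ)) := by
  classical
  have hd : ∀ x : M, (0:ℝ) ≤ dist x a := fun x => dist_nonneg
  have hfc : Continuous fun x : M => C (dist x a) :=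
    hcont.comp_continuous (continuous_id.dist continuous_const) fun x => hd x
  set F : M → ℝ≥0∞ := fun x => ENNReal.ofReal (C (dist x a)) with hFdef
  have hFm : Measurable F := (ENNReal.continuous_ofReal.comp hfc).measurable
  have hrw : ∀ ν : Measure M, ∫ x, C (dist x a) ∂ν = (∫⁻ x, F x ∂ν).toReal := by
    intro ν
    rw [integral_eq_lintegral_of_nonneg_ae
      (Filter.Eventually.of_forall fun x => hCnonneg _ (hd x)) hfc.aestronglyMeasurable]
  have hfin : ∀ (ν : Measure M), Integrable (fun x => C (2 * dist x a)) ν →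
      ∫⁻ x, F x ∂ν ≠ ⊤ := by
    intro ν hν
    have h1 : ∫⁻ x, F x ∂ν ≤ ∫⁻ x, ENNReal.ofReal (C (2 * dist x a)) ∂ν := by
      refine lintegral_mono fun x => ENNReal.ofReal_le_ofReal ?_
      exact hmono (mem_Ici.mpr (hd x)) (mem_Ici.mpr (by positivity))
        (by linarith [hd x])
    exact ne_top_of_le_ne_top hν.lintegral_lt_top.ne h1
  by_cases hz : ∃ t : ℝ, 0 < t ∧ 0 < C t
  swap
  · -- C vanishes on [0, ∞)
    push_neg at hz
    have hzero : ∀ t : ℝ, 0 ≤ t → C t = 0 := by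
      intro t ht
      rcases eq_or_lt_of_le ht with h | h
      · rw [← h]; exact hC0
      · exact le_antisymm (hz t h) (hCnonneg t h.le)
    have hzint : ∀ ν : Measure M, ∫ x, C (dist x a) ∂ν = 0 := by
      intro ν
      rw [show (fun x : M => C (dist x a)) = fun _ => (0:ℝ) from
        funext fun x => hzero _ (hd x)]
      simp
    simp only [hzint]
    exact tendsto_const_nhds
  -- Main case: C is positive on (0, ∞)
  obtain ⟨t₀, ht₀, hCt₀⟩ := hz
  have hpow : ∀ (k : ℕ) (y : ℝ), 0 ≤ y → C (2 ^ k * y) ≤ lam ^ k * C y := by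
    intro k
    induction k with
    | zero => intro y hy; simp
    | succ k ih =>
      intro y hy
      have h2k : (0:ℝ) ≤ 2 ^ k * y := by positivity
      calc C (2 ^ (k+1) * y) = C (2 * (2 ^ k * y)) := by ring_nf
        _ ≤ lam * C (2 ^ k * y) := hdbl _ h2k
        _ ≤ lam * (lam ^ k * C y) := mul_le_mul_of_nonneg_left (ih y hy) hlam.le
        _ = lam ^ (k+1) * C y := by ring
  have hCpos : ∀ t : ℝ, 0 < t → 0 < C t := by
    intro t ht
    rcases lt_or_eq_of_le (hCnonneg t ht.le) with h | h
    · exact h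
    exfalso
    obtain ⟨k, hk⟩ := pow_unbounded_of_one_lt (t₀ / t) (by norm_num : (1:ℝ) < 2)
    have hle : t₀ ≤ 2 ^ k * t := by
      rw [div_lt_iff₀ ht] at hk
      linarith
    have h2kt : (0:ℝ) ≤ 2 ^ k * t := by positivity
    have h1 : C t₀ ≤ C (2 ^ k * t) := hmono ht₀.le h2kt hle
    have h2 : C (2 ^ k * t) ≤ lam ^ k * C t := hpow k t ht.le
    rw [← h] at h2
    simp only [mul_zero] at h2
    linarith
  -- Reduce to ENNReal convergence of lintegrals
  have hBfin : ∫⁻ x, F x ∂μ ≠ ⊤ := hfin μ hint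
  simp only [hrw]
  have key : Tendsto (fun n => ∫⁻ x, F x ∂(μn n)) atTop (nhds (∫⁻ x, F x ∂μ)) := by
    rw [ENNReal.tendsto_nhds hBfin]
    intro ε' hε'
    set e : ℝ≥0∞ := min (ε' / 5) 1 with he_def
    have he0 : 0 < e := lt_min (ENNReal.div_pos hε'.ne' (by norm_num)) one_pos
    have heT : e ≠ ⊤ := ne_top_of_le_ne_top (by norm_num) (min_le_right _ _)
    have he5 : e ≤ ε' / 5 := min_le_left _ _
    have her0 : 0 < e.toReal := ENNReal.toReal_pos he0.ne' heT
    have hofer : ENNReal.ofReal e.toReal = e := ENNReal.ofReal_toReal heT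
    set lam' : ℝ≥0∞ := ENNReal.ofReal lam with hlam'def
    have hlam'T : lam' ≠ ⊤ := ENNReal.ofReal_ne_top
    set m : ℝ≥0∞ := lam' + 1 with hm
    have hm0 : m ≠ 0 := by
      have : (0:ℝ≥0∞) < m := lt_of_lt_of_le one_pos le_add_self
      exact this.ne'
    have hmT : m ≠ ⊤ := by
      rw [hm]
      exact ENNReal.add_ne_top.2 ⟨hlam'T, ENNReal.one_ne_top⟩
    set τ : ℝ≥0∞ := e / m with hτdef
    have hτ0 : 0 < τ := ENNReal.div_pos he0.ne' hmT
    have hmτ : m * τ ≤ e := ENNReal.mul_div_le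
    -- choose R : tail in space
    have hRt : Tendsto (fun k : ℕ => ∫⁻ x, {y : M | (k:ℝ) < dist y a}.indicator F x ∂μ)
        atTop (nhds 0) := by
      refine tail_tendsto_aux μ F hFm hBfin _ (fun k => ?_) (fun x => ?_)
      · exact measurableSet_lt measurable_const (continuous_id.dist continuous_const).measurable
      · obtain ⟨N, hN⟩ := exists_nat_ge (dist x a)
        filter_upwards [eventually_ge_atTop N] with k hk
        simp only [Set.mem_setOf_eq, not_lt]
        exact hN.trans (by exact_mod_cast hk)
    obtain ⟨R, hR⟩ := (hRt.eventually (gt_mem_nhds hτ0)).exists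
    -- choose K : tail in value
    have hKt : Tendsto (fun k : ℕ => ∫⁻ x, {y : M | (k:ℝ≥0∞) < F y}.indicator F x ∂μ)
        atTop (nhds 0) := by
      refine tail_tendsto_aux μ F hFm hBfin _ (fun k => ?_) (fun x => ?_)
      · exact measurableSet_lt measurable_const hFm
      · obtain ⟨N, hN⟩ := ENNReal.exists_nat_gt (show F x ≠ ⊤ from ENNReal.ofReal_ne_top)
        filter_upwards [eventually_ge_atTop N] with k hk
        simp only [Set.mem_setOf_eq, not_lt]
        exact hN.le.trans (by exact_mod_cast hk)
    obtain ⟨K, hK, hK1⟩ := ((hKt.eventually (gt_mem_nhds hτ0)).and (eventually_ge_atTop 1)).exists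
    -- uniform continuity on [0, R+1]
    have hunif : UniformContinuousOn C (Icc 0 ((R:ℝ) + 1)) :=
      isCompact_Icc.uniformContinuousOn_of_continuous (hcont.mono fun x hx => hx.1)
    rw [Metric.uniformContinuousOn_iff] at hunif
    obtain ⟨η₀, hη₀, hmod⟩ := hunif e.toReal her0
    set η : ℝ := min (η₀ / 2) 1 with hηdef
    have hη0 : 0 < η := lt_min (by linarith) one_pos
    have hη1 : η ≤ 1 := min_le_right _ _
    have hηlt : η < η₀ := lt_of_le_of_lt (min_le_left _ _) (by linarith)
    set cη : ℝ≥0∞ := ENNReal.ofReal (C η) with hcηdef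
    have hcη0 : cη ≠ 0 := (ENNReal.ofReal_pos.2 (hCpos η hη0)).ne'
    have hcηT : cη ≠ ⊤ := ENNReal.ofReal_ne_top
    set Ke : ℝ≥0∞ := (K : ℝ≥0∞) with hKedef
    have hKe0 : Ke ≠ 0 := by
      simp only [hKedef, Ne, Nat.cast_eq_zero]
      omega
    have hKeT : Ke ≠ ⊤ := ENNReal.natCast_ne_top K
    have hmKe : m * Ke ≠ 0 := mul_ne_zero hm0 hKe0
    have hmKeT : m * Ke ≠ ⊤ := ENNReal.mul_ne_top hmT hKeT
    set δ : ℝ≥0∞ := min (cη * (e / (m * Ke))) (e / lam') with hδdef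
    have hδ0 : 0 < δ := by
      refine lt_min ?_ (ENNReal.div_pos he0.ne' hlam'T)
      exact ENNReal.mul_pos hcη0 (ENNReal.div_pos he0.ne' hmKeT).ne'
    filter_upwards [hT.eventually (gt_mem_nhds hδ0)] with n hn
    -- obtain a near-optimal coupling
    rw [transportCost, iInf_lt_iff] at hn
    obtain ⟨π, hn⟩ := hn
    rw [iInf_lt_iff] at hn
    obtain ⟨⟨hprob, hfst, hsnd⟩, hD⟩ := hn
    haveI := hprob
    have hcostc : Continuous fun p : M × M => C (dist p.1 p.2) :=
      hcont.comp_continuous continuous_dist fun p => dist_nonneg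
    have hcostm : Measurable fun p : M × M => ENNReal.ofReal (C (dist p.1 p.2)) :=
      (ENNReal.continuous_ofReal.comp hcostc).measurable
    set i1 : M × M → ℝ≥0∞ := fun p => if η < dist p.1 p.2 then 1 else 0 with hi1def
    set i2 : M × M → ℝ≥0∞ := fun p => if (R:ℝ) < dist p.2 a then 1 else 0 with hi2def
    have hSη : MeasurableSet {p : M × M | η < dist p.1 p.2} :=
      measurableSet_lt measurable_const continuous_dist.measurable
    have hSR : MeasurableSet {p : M × M | (R:ℝ) < dist p.2 a} :=
      measurableSet_lt measurable_const (continuous_snd.dist continuous_const).measurable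
    have hi1m : Measurable i1 := Measurable.ite hSη measurable_const measurable_const
    have hi2m : Measurable i2 := Measurable.ite hSR measurable_const measurable_const
    have hFsnd : Measurable fun p : M × M => F p.2 := hFm.comp measurable_snd
    set Φ : M × M → ℝ≥0∞ := fun p =>
      e + lam' * ENNReal.ofReal (C (dist p.1 p.2)) + m * (i1 p * F p.2 + i2 p * F p.2) with hΦdef
    have hΦm : Measurable Φ := by
      apply Measurable.add
      · exact measurable_const.add (hcostm.const_mul _)
      · exact ((hi1m.mul hFsnd).add (hi2m.mul hFsnd)).const_mul _
    -- pointwise claims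
    have claim : ∀ p : M × M, F p.1 ≤ F p.2 + Φ p ∧ F p.2 ≤ F p.1 + Φ p := by
      rintro ⟨x, y⟩
      by_cases h1 : dist x y ≤ η ∧ dist y a ≤ (R:ℝ)
      · obtain ⟨hxy, hya⟩ := h1
        have htri := dist_triangle x y a
        have hxa : dist x a ≤ (R:ℝ) + 1 := by linarith
        have hmem1 : dist x a ∈ Icc (0:ℝ) ((R:ℝ)+1) := ⟨dist_nonneg, hxa⟩
        have hmem2 : dist y a ∈ Icc (0:ℝ) ((R:ℝ)+1) := ⟨dist_nonneg, by linarith⟩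
        have hclose : dist (dist x a) (dist y a) < η₀ := by
          rw [Real.dist_eq]
          calc |dist x a - dist y a| ≤ dist x y := abs_dist_sub_le x y a
            _ ≤ η := hxy
            _ < η₀ := hηlt
        have hmb := hmod _ hmem1 _ hmem2 hclose
        rw [Real.dist_eq, abs_lt] at hmb
        have heΦ : e ≤ Φ (x, y) := le_add_right le_self_add
        constructor
        · calc F (x, y).1 = ENNReal.ofReal (C (dist x a)) := rfl
            _ ≤ ENNReal.ofReal (C (dist y a) + e.toReal) :=
                ENNReal.ofReal_le_ofReal (by linarith [hmb.1, hmb.2])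
            _ ≤ ENNReal.ofReal (C (dist y a)) + ENNReal.ofReal e.toReal :=
                ENNReal.ofReal_add_le
            _ = F (x, y).2 + e := by rw [hofer]
            _ ≤ F (x, y).2 + Φ (x, y) := add_le_add_right heΦ _
        · calc F (x, y).2 = ENNReal.ofReal (C (dist y a)) := rfl
            _ ≤ ENNReal.ofReal (C (dist x a) + e.toReal) :=
                ENNReal.ofReal_le_ofReal (by linarith [hmb.1, hmb.2])
            _ ≤ ENNReal.ofReal (C (dist x a)) + ENNReal.ofReal e.toReal :=
                ENNReal.ofReal_add_le
            _ = F (x, y).1 + e := by rw [hofer]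
            _ ≤ F (x, y).1 + Φ (x, y) := add_le_add_right heΦ _
      · -- at least one indicator is on
        have hind : F y ≤ i1 (x, y) * F y + i2 (x, y) * F y := by
          by_cases hxy : η < dist x y
          · have h1' : i1 (x, y) = 1 := if_pos hxy
            rw [h1', one_mul]
            exact le_self_add
          · have hya : (R:ℝ) < dist y a := by
              by_contra hya
              exact h1 ⟨not_lt.1 hxy, not_lt.1 hya⟩
            have h2' : i2 (x, y) = 1 := if_pos hya
            rw [h2', one_mul]
            exact le_add_self
        have hreal : C (dist x a) ≤ lam * C (dist x y) + lam * C (dist y a) := by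
          have h1' : dist x a ≤ dist x y + dist y a := dist_triangle x y a
          set mx : ℝ := max (dist x y) (dist y a) with hmx
          have hmx0 : 0 ≤ mx := le_trans dist_nonneg (le_max_left _ _)
          have h2' : dist x y + dist y a ≤ 2 * mx := by
            have := le_max_left (dist x y) (dist y a)
            have := le_max_right (dist x y) (dist y a)
            linarith
        
          have h3' : C (dist x a) ≤ C (2 * mx) :=
            hmono (mem_Ici.mpr dist_nonneg) (mem_Ici.mpr (by linarith)) (by linarith)
          have h4' : C (2 * mx) ≤ lam * C mx := hdbl _ hmx0
          have h5' : C mx ≤ C (dist x y) + C (dist y a) := by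
            have hcy := hCnonneg (dist y a) (mem_Ici.mpr dist_nonneg)
            have hcx := hCnonneg (dist x y) (mem_Ici.mpr dist_nonneg)
            rcases max_cases (dist x y) (dist y a) with ⟨hcase, _⟩ | ⟨hcase, _⟩ <;>
              rw [hmx, hcase] <;> linarith
          have h6' : lam * C mx ≤ lam * (C (dist x y) + C (dist y a)) :=
            mul_le_mul_of_nonneg_left h5' hlam.le
          calc C (dist x a) ≤ C (2 * mx) := h3'
            _ ≤ lam * C mx := h4'
            _ ≤ lam * (C (dist x y) + C (dist y a)) := h6'
            _ = lam * C (dist x y) + lam * C (dist y a) := by ring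
        have hFx : F x ≤ lam' * ENNReal.ofReal (C (dist x y)) + lam' * F y := by
          calc F x ≤ ENNReal.ofReal (lam * C (dist x y) + lam * C (dist y a)) :=
              ENNReal.ofReal_le_ofReal hreal
            _ ≤ ENNReal.ofReal (lam * C (dist x y)) + ENNReal.ofReal (lam * C (dist y a)) :=
              ENNReal.ofReal_add_le
            _ = lam' * ENNReal.ofReal (C (dist x y)) + lam' * F y := by
              rw [ENNReal.ofReal_mul hlam.le, ENNReal.ofReal_mul hlam.le]
        have hlamm : lam' * F y ≤ m * (i1 (x, y) * F y + i2 (x, y) * F y) :=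
          mul_le_mul' (le_add_right le_rfl) hind
        have hΦbig : lam' * ENNReal.ofReal (C (dist x y)) + lam' * F y ≤ Φ (x, y) := by
          calc lam' * ENNReal.ofReal (C (dist x y)) + lam' * F y
              ≤ lam' * ENNReal.ofReal (C (dist x y)) +
                m * (i1 (x, y) * F y + i2 (x, y) * F y) := add_le_add_right hlamm _
            _ ≤ Φ (x, y) := by
              rw [hΦdef]
              exact add_le_add_left (le_add_left le_rfl) _
        constructor
        · exact le_trans (hFx.trans hΦbig) le_add_self
        · refine le_trans ?_ le_add_self
          calc F (x, y).2 = 1 * F y := (one_mul _).symm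
            _ ≤ m * (i1 (x, y) * F y + i2 (x, y) * F y) :=
              mul_le_mul' (le_add_left le_rfl) hind
            _ ≤ Φ (x, y) := by
              rw [hΦdef]
              exact le_add_left le_rfl
    -- marginal identities
    have hfst' : ∫⁻ p, F p.1 ∂π = ∫⁻ x, F x ∂(μn n) := by
      rw [← hfst, lintegral_map hFm measurable_fst]
    have hsnd' : ∫⁻ p, F p.2 ∂π = ∫⁻ x, F x ∂μ := by
      rw [← hsnd, lintegral_map hFm measurable_snd]
    -- bound the integral of Φ
    have hΦe : ∫⁻ p, Φ p ∂π ≤ ε' := by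
      have hπuniv : π Set.univ = 1 := measure_univ
      set D : ℝ≥0∞ := ∫⁻ p, ENNReal.ofReal (C (dist p.1 p.2)) ∂π with hDdef
      have hgRm : Measurable fun y : M => if (R:ℝ) < dist y a then F y else 0 :=
        Measurable.ite (measurableSet_lt measurable_const
          (continuous_id.dist continuous_const).measurable) hFm measurable_const
      have hT2 : ∫⁻ p, i2 p * F p.2 ∂π ≤ τ := by
        have heq : ∀ p : M × M,
            i2 p * F p.2 = (fun y : M => if (R:ℝ) < dist y a then F y else 0) p.2 := by
          intro p
          by_cases h : (R:ℝ) < dist p.2 a <;> simp [hi2def, h]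
        calc ∫⁻ p, i2 p * F p.2 ∂π
            = ∫⁻ p, (fun y : M => if (R:ℝ) < dist y a then F y else 0) p.2 ∂π := by
              simp only [heq]
          _ = ∫⁻ y, (if (R:ℝ) < dist y a then F y else 0) ∂μ := by
              rw [← hsnd]; exact (lintegral_map hgRm measurable_snd).symm
          _ = ∫⁻ y, ({y : M | (R:ℝ) < dist y a}).indicator F y ∂μ := by
              refine lintegral_congr fun y => ?_
              simp [Set.indicator_apply, Set.mem_setOf_eq]
          _ ≤ τ := hR.le
      have hSKm : MeasurableSet {y : M | Ke < F y} := measurableSet_lt measurable_const hFm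
      have hgKm : Measurable fun y : M => if Ke < F y then F y else 0 :=
        Measurable.ite hSKm hFm measurable_const
      have htailK : ∫⁻ p, (fun y : M => if Ke < F y then F y else 0) p.2 ∂π ≤ τ := by
        calc ∫⁻ p, (fun y : M => if Ke < F y then F y else 0) p.2 ∂π
            = ∫⁻ y, (if Ke < F y then F y else 0) ∂μ := by
              rw [← hsnd]; exact (lintegral_map hgKm measurable_snd).symm
          _ = ∫⁻ y, ({y : M | (K:ℝ≥0∞) < F y}).indicator F y ∂μ := by
              refine lintegral_congr fun y => ?_
              simp [Set.indicator_apply, Set.mem_setOf_eq, hKedef]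
          _ ≤ τ := hK.le
      have hptK : ∀ p : M × M,
          i1 p * F p.2 ≤ i1 p * Ke + (fun y : M => if Ke < F y then F y else 0) p.2 := by
        intro p
        by_cases h : Ke < F p.2
        · simp only [if_pos h]
          have h1 : i1 p ≤ 1 := by
            rw [hi1def]; dsimp only; split <;> simp
          calc i1 p * F p.2 ≤ 1 * F p.2 := mul_le_mul' h1 le_rfl
            _ = F p.2 := one_mul _
            _ ≤ i1 p * Ke + F p.2 := le_add_self
        · simp only [if_neg h, add_zero]
          exact mul_le_mul' le_rfl (not_lt.1 h)
      have hi1int : ∫⁻ p, i1 p ∂π = π {p : M × M | η < dist p.1 p.2} := by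
        have h1 : ∀ p : M × M, i1 p = ({p : M × M | η < dist p.1 p.2}).indicator 1 p := by
          intro p; simp [hi1def, Set.indicator_apply, Set.mem_setOf_eq]
        simp only [h1]
        exact lintegral_indicator_one hSη
      have hmeasη : π {p : M × M | η < dist p.1 p.2} ≤ δ / cη := by
        have hsub : {p : M × M | η < dist p.1 p.2} ⊆
            {p : M × M | cη ≤ ENNReal.ofReal (C (dist p.1 p.2))} := by
          intro p hp
          exact ENNReal.ofReal_le_ofReal
            (hmono (mem_Ici.mpr hη0.le) (mem_Ici.mpr dist_nonneg) (le_of_lt hp))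
        have h1 := mul_meas_ge_le_lintegral₀ (μ := π) hcostm.aemeasurable cη
        have h2 : cη * π {p : M × M | η < dist p.1 p.2} ≤ δ :=
          le_trans (le_trans (mul_le_mul' le_rfl (measure_mono hsub)) h1) hD.le
        rw [ENNReal.le_div_iff_mul_le (Or.inl hcη0) (Or.inl hcηT), mul_comm]
        exact h2
      have hδ1 : δ / cη ≤ e / (m * Ke) := by
        calc δ / cη ≤ (cη * (e / (m * Ke))) / cη :=
            ENNReal.div_le_div_right (min_le_left _ _) _
          _ = e / (m * Ke) := by
            rw [mul_comm, mul_div_assoc, ENNReal.div_self hcη0 hcηT, mul_one]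
      have hT1 : ∫⁻ p, i1 p * F p.2 ∂π ≤ e / (m * Ke) * Ke + τ := by
        calc ∫⁻ p, i1 p * F p.2 ∂π
            ≤ ∫⁻ p, (i1 p * Ke + (fun y : M => if Ke < F y then F y else 0) p.2) ∂π :=
              lintegral_mono hptK
          _ = ∫⁻ p, i1 p * Ke ∂π
              + ∫⁻ p, (fun y : M => if Ke < F y then F y else 0) p.2 ∂π :=
              lintegral_add_left (hi1m.mul_const _) _
          _ ≤ ∫⁻ p, i1 p * Ke ∂π + τ := add_le_add le_rfl htailK
          _ = π {p : M × M | η < dist p.1 p.2} * Ke + τ := by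
              rw [lintegral_mul_const _ hi1m, hi1int]
          _ ≤ δ / cη * Ke + τ := add_le_add (mul_le_mul' hmeasη le_rfl) le_rfl
          _ ≤ e / (m * Ke) * Ke + τ := add_le_add (mul_le_mul' hδ1 le_rfl) le_rfl
      have hdec : ∫⁻ p, Φ p ∂π =
          e + lam' * D + m * (∫⁻ p, i1 p * F p.2 ∂π + ∫⁻ p, i2 p * F p.2 ∂π) := by
        calc ∫⁻ p, Φ p ∂π
            = ∫⁻ p, (e + lam' * ENNReal.ofReal (C (dist p.1 p.2))) ∂π
              + ∫⁻ p, m * (i1 p * F p.2 + i2 p * F p.2) ∂π :=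
              lintegral_add_left (measurable_const.add (hcostm.const_mul _)) _
          _ = (∫⁻ _, (e:ℝ≥0∞) ∂π + ∫⁻ p, lam' * ENNReal.ofReal (C (dist p.1 p.2)) ∂π)
              + ∫⁻ p, m * (i1 p * F p.2 + i2 p * F p.2) ∂π := by
              rw [lintegral_add_left measurable_const]
          _ = e + lam' * D
              + m * (∫⁻ p, i1 p * F p.2 ∂π + ∫⁻ p, i2 p * F p.2 ∂π) := by
              rw [lintegral_const, hπuniv, mul_one, lintegral_const_mul _ hcostm,
                lintegral_const_mul _ (f := fun p => i1 p * F p.2 + i2 p * F p.2) ((hi1m.mul hFsnd).add (hi2m.mul hFsnd)),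
                lintegral_add_left (f := fun p => i1 p * F p.2) (hi1m.mul hFsnd)]
      have hle1 : lam' * D ≤ e := by
        calc lam' * D ≤ lam' * δ := mul_le_mul' le_rfl hD.le
          _ ≤ lam' * (e / lam') := mul_le_mul' le_rfl (min_le_right _ _)
          _ ≤ e := ENNReal.mul_div_le
      calc ∫⁻ p, Φ p ∂π
          = e + lam' * D + m * (∫⁻ p, i1 p * F p.2 ∂π + ∫⁻ p, i2 p * F p.2 ∂π) := hdec
        _ ≤ e + e + m * ((e / (m * Ke) * Ke + τ) + τ) :=
            add_le_add (add_le_add le_rfl hle1) (mul_le_mul' le_rfl (add_le_add hT1 hT2))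
        _ ≤ e + e + (e + e + e) := by
            refine add_le_add le_rfl ?_
            have h1 : m * (e / (m * Ke) * Ke) ≤ e := by
              have h2 : m * (e / (m * Ke) * Ke) = (m * Ke) * (e / (m * Ke)) := by ring
              rw [h2]; exact ENNReal.mul_div_le
            calc m * ((e / (m * Ke) * Ke + τ) + τ)
                = m * (e / (m * Ke) * Ke) + m * τ + m * τ := by ring
              _ ≤ e + e + e := add_le_add (add_le_add h1 hmτ) hmτ
        _ ≤ ε' := by
            have h5 : e + e + (e + e + e) = 5 * e := by ring
            rw [h5]
            calc 5 * e ≤ 5 * (ε' / 5) := mul_le_mul' le_rfl he5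
              _ ≤ ε' := ENNReal.mul_div_le
    have hfstm : Measurable fun p : M × M => F p.1 := hFm.comp measurable_fst
    have hstep : ∀ g h : M × M → ℝ≥0∞, Measurable h → (∀ p, g p ≤ h p + Φ p) →
        ∫⁻ p, g p ∂π ≤ ∫⁻ p, h p ∂π + ∫⁻ p, Φ p ∂π := by
      intro g h hh hle
      calc ∫⁻ p, g p ∂π ≤ ∫⁻ p, (h p + Φ p) ∂π := lintegral_mono hle
        _ = ∫⁻ p, h p ∂π + ∫⁻ p, Φ p ∂π := lintegral_add_left hh _
    constructor
    · rw [tsub_le_iff_right]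
      calc ∫⁻ x, F x ∂μ = ∫⁻ p, F p.2 ∂π := hsnd'.symm
        _ ≤ ∫⁻ p, F p.1 ∂π + ∫⁻ p, Φ p ∂π := hstep _ _ hfstm fun p => (claim p).2
        _ ≤ ∫⁻ x, F x ∂(μn n) + ε' := by rw [hfst']; exact add_le_add_right hΦe _
    · calc ∫⁻ x, F x ∂(μn n) = ∫⁻ p, F p.1 ∂π := hfst'.symm
        _ ≤ ∫⁻ p, F p.2 ∂π + ∫⁻ p, Φ p ∂π := hstep _ _ hFsnd fun p => (claim p).1
        _ ≤ ∫⁻ x, F x ∂μ + ε' := by rw [hsnd']; exact add_le_add_right hΦe _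
  exact (ENNReal.tendsto_toReal hBfin).comp key
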